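/- Let τ ∈ ℂ with Im τ > 0 and |τ| = 1, and let Γ_τ = {m + n·τ : m, n ∈ ℤ}. Suppose I(z) = a·conj(z) + b with a ∈ {τ, −τ} and b ∈ ℂ is a lift of an antiholomorphic involution of the torus ℂ/Γ_τ. Then I has a fixpoint, i.e. there exists z ∈ ℂ with I(z) − z ∈ Γ_τ. -/

import Mathlib

open Complex

theorem stmt_2 (τ : ℂ) (hτ : 0 < τ.im) (habs : ‖τ‖ = 1)
    (Γ : Set ℂ) (hΓ : Γ = {z : ℂ | ∃ m n : ℤ, z = m + n * τ})
    (a b : ℂ) (ha : a = τ ∨ a = -τ)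
    (I : ℂ → ℂ) (hI : ∀ z : ℂ, I z = a * starRingEnd ℂ z + b)
    (hper : ∀ z : ℂ, ∀ ω ∈ Γ, I (z + ω) - I z ∈ Γ)
    (hinv : ∀ z : ℂ, I (I z) - z ∈ Γ) :
    ∃ z : ℂ, I z - z ∈ Γ := by
  have hτim : τ.im ≠ 0 := ne_of_gt hτ
  set q : ℝ := b.im / τ.im with hq
  set p : ℝ := b.re - q * τ.re with hp
  have hb : b = (p : ℂ) + (q : ℂ) * τ := by
    apply Complex.ext
    · simp [hp]
    · simp [hq]; field_simp
  have hns : Complex.normSq τ = 1 := by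
    rw [← Complex.sq_norm, habs]; norm_num
  have hττ : τ * (starRingEnd ℂ) τ = 1 := by
    rw [Complex.mul_conj, hns]; norm_num
  obtain ⟨m, n, hmn⟩ : ∃ m n : ℤ, a * (starRingEnd ℂ) b + b = m + n * τ := by
    have h0 := hinv 0
    rw [hΓ] at h0
    simpa [hI] using h0
  rcases ha with haτ | haτ
  · -- a = τ
    have key : ((p : ℂ) + q) + ((p : ℂ) + q) * τ = (m : ℂ) + n * τ := by
      rw [← hmn, haτ, hb]
      have : (starRingEnd ℂ) ((p : ℂ) + (q : ℂ) * τ)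
          = (p : ℂ) + (q : ℂ) * (starRingEnd ℂ) τ := by
        simp [map_add, map_mul, Complex.conj_ofReal]
      rw [this]
      linear_combination (-(q : ℂ)) * hττ
    have him := congrArg Complex.im key
    simp [Complex.add_im, Complex.mul_im, Complex.ofReal_im] at him
    have hn : p + q = (n : ℝ) := him.resolve_right hτim
    refine ⟨(p : ℂ), ?_⟩
    rw [hΓ]
    refine ⟨0, n, ?_⟩
    have hn' : (p : ℂ) + (q : ℂ) = (n : ℂ) := by exact_mod_cast hn
    rw [hI, haτ, hb, Complex.conj_ofReal]
    push_cast
    linear_combination τ * hn'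
  · -- a = -τ
    have key : ((p : ℂ) - q) + ((q : ℂ) - p) * τ = (m : ℂ) + n * τ := by
      rw [← hmn, haτ, hb]
      have : (starRingEnd ℂ) ((p : ℂ) + (q : ℂ) * τ)
          = (p : ℂ) + (q : ℂ) * (starRingEnd ℂ) τ := by
        simp [map_add, map_mul, Complex.conj_ofReal]
      rw [this]
      linear_combination (q : ℂ) * hττ
    have him := congrArg Complex.im key
    simp [Complex.add_im, Complex.mul_im, Complex.ofReal_im, Complex.sub_im] at him
    have hn : q - p = (n : ℝ) := him.resolve_right hτim
    refine ⟨(q : ℂ), ?_⟩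
    rw [hΓ]
    refine ⟨-n, 0, ?_⟩
    have hn' : (q : ℂ) - (p : ℂ) = (n : ℂ) := by exact_mod_cast hn
    rw [hI, haτ, hb, Complex.conj_ofReal]
    push_cast
    linear_combination -hn'
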